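/- arXiv:2103.07984 — 3 statements merged into one kernel-verified Lean document; each statement's English description precedes it below -/
import Mathlib

section
/- Fix x₀ ∈ ℝⁿ and a real q ≥ 2. The function ψ(x) = (1/q)‖x − x₀‖^q is uniformly convex of degree q with constant σ_q = (1/2)^{q−2}, i.e., for all x, y: ψ(y) ≥ ψ(x) + ⟨∇ψ(x), y − x⟩ + (σ_q/q)‖x − y‖^q. -/
open Real

lemma aux_rpow_sub_one_mul {x : ℝ} (hx : 0 ≤ x) {r : ℝ} (hr : 0 < r) :
    x ^ (r - 1) * x = x ^ r := by
  rcases eq_or_lt_of_le hx with h | h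
  · rw [← h, mul_zero, Real.zero_rpow hr.ne']
  · rw [← Real.rpow_add_one h.ne' (r - 1)]; ring_nf

lemma aux_sq_rpow (x r : ℝ) : ((x ^ 2 : ℝ)) ^ r = |x| ^ (2 * r) := by
  rw [← sq_abs, ← Real.rpow_natCast |x| 2, ← Real.rpow_mul (abs_nonneg x)]
  norm_num

lemma aux_superadd {x y : ℝ} (hx : 0 ≤ x) (hy : 0 ≤ y) {r : ℝ} (hr : 1 ≤ r) :
    x ^ r + y ^ r ≤ (x + y) ^ r := by
  have hr0 : 0 < r := lt_of_lt_of_le one_pos hr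
  rcases eq_or_lt_of_le (add_nonneg hx hy) with h | h
  · have hx0 : x = 0 := by linarith
    have hy0 : y = 0 := by linarith
    simp [hx0, hy0, Real.zero_rpow hr0.ne']
  · rw [← aux_rpow_sub_one_mul hx hr0, ← aux_rpow_sub_one_mul hy hr0,
      ← aux_rpow_sub_one_mul (add_nonneg hx hy) hr0]
    have hxle : x ^ (r - 1) ≤ (x + y) ^ (r - 1) :=
      Real.rpow_le_rpow hx (by linarith) (by linarith)
    have hyle : y ^ (r - 1) ≤ (x + y) ^ (r - 1) :=
      Real.rpow_le_rpow hy (by linarith) (by linarith)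
    have := mul_le_mul_of_nonneg_right hxle hx
    have := mul_le_mul_of_nonneg_right hyle hy
    nlinarith

lemma aux_powmean {x y : ℝ} (hx : 0 ≤ x) (hy : 0 ≤ y) {r : ℝ} (hr : 1 ≤ r) :
    (1 / 2 : ℝ) ^ (r - 1) * (x + y) ^ r ≤ x ^ r + y ^ r := by
  have h := (convexOn_rpow hr).2 (Set.mem_Ici.2 hx) (Set.mem_Ici.2 hy)
    (by norm_num : (0:ℝ) ≤ (1/2:ℝ)) (by norm_num : (0:ℝ) ≤ (1/2:ℝ)) (by norm_num)
  simp only [smul_eq_mul] at h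
  have hmul : ((1/2 : ℝ) * x + (1/2) * y) ^ r = (1/2 : ℝ) ^ r * (x + y) ^ r := by
    rw [← Real.mul_rpow (by norm_num) (add_nonneg hx hy)]; ring_nf
  rw [hmul] at h
  have hhalf : (1/2 : ℝ) ^ r = (1/2 : ℝ) ^ (r - 1) * (1/2) := by
    rw [← Real.rpow_add_one (by norm_num : (1/2:ℝ) ≠ 0) (r - 1)]; ring_nf
  rw [hhalf] at h
  nlinarith

/-- scalar Bregman inequality: `|b|^q ≥ a^q + q a^(q-1) (b-a) + (1/2)^(q-2) |b-a|^q`. -/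
lemma scalarBregman (q : ℝ) (hq : 2 ≤ q) {a : ℝ} (ha : 0 ≤ a) (b : ℝ) :
    a ^ q + q * a ^ (q - 1) * (b - a) + (1 / 2 : ℝ) ^ (q - 2) * |b - a| ^ q ≤ |b| ^ q := by
  have hq0 : (0:ℝ) < q := by linarith
  have hq1 : (0:ℝ) < q - 1 := by linarith
  set K : ℝ := (1 / 2 : ℝ) ^ (q - 2) with hKdef
  have hK0 : 0 ≤ K := Real.rpow_nonneg (by norm_num) _
  have hK1 : K ≤ 1 := Real.rpow_le_one (by norm_num) (by norm_num) (by linarith)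
  set F : ℝ → ℝ := fun t => (t ^ 2) ^ (q / 2) - K * ((t - a) ^ 2) ^ (q / 2)
      - q * a ^ (q - 1) * (t - a) with hFdef
  set F' : ℝ → ℝ := fun t => q * ((t ^ 2) ^ ((q - 2) / 2) * t
      - K * (((t - a) ^ 2) ^ ((q - 2) / 2) * (t - a)) - a ^ (q - 1)) with hF'def
  have hhalf : 1 ≤ q / 2 := by linarith
  have hderiv : ∀ t : ℝ, HasDerivAt F (F' t) t := by
    intro t
    have h1 : HasDerivAt (fun t : ℝ => (t ^ 2) ^ (q / 2))
        ((2 * t) * (q / 2) * (t ^ 2) ^ (q / 2 - 1)) t := by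
      have hp : HasDerivAt (fun t : ℝ => t ^ 2) (2 * t) t := by
        simpa using hasDerivAt_pow 2 t
      exact hp.rpow_const (Or.inr hhalf)
    have h2 : HasDerivAt (fun t : ℝ => ((t - a) ^ 2) ^ (q / 2))
        ((2 * (t - a)) * (q / 2) * ((t - a) ^ 2) ^ (q / 2 - 1)) t := by
      have hp : HasDerivAt (fun t : ℝ => (t - a) ^ 2) (2 * (t - a)) t := by
        simpa using ((hasDerivAt_id t).sub_const a).fun_pow 2
      exact hp.rpow_const (Or.inr hhalf)
    have h3 : HasDerivAt (fun t : ℝ => q * a ^ (q - 1) * (t - a)) (q * a ^ (q - 1)) t := by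
      simpa using ((hasDerivAt_id t).sub_const a).const_mul (q * a ^ (q - 1))
    have := (h1.sub (h2.const_mul K)).sub h3
    refine this.congr_deriv ?_
    simp only [hF'def]
    rw [show q / 2 - 1 = (q - 2) / 2 by ring]
    ring
  have hFa : F a = a ^ q := by
    simp only [hFdef, sub_self]
    rw [aux_sq_rpow a (q / 2), abs_of_nonneg ha, show 2 * (q / 2) = q by ring]
    have : ((0:ℝ) ^ 2) ^ (q/2) = 0 := by
      rw [aux_sq_rpow 0 (q/2)]; simp [Real.zero_rpow (by positivity : 2 * (q/2) ≠ 0)]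
    rw [this]; ring
  -- sign of derivative
  have hsign_pos : ∀ t, a ≤ t → 0 ≤ F' t := by
    intro t hta
    have ht0 : 0 ≤ t := le_trans ha hta
    have e1 : ((t:ℝ) ^ 2) ^ ((q - 2) / 2) * t = t ^ (q - 1) := by
      rw [aux_sq_rpow t ((q-2)/2), abs_of_nonneg ht0, show 2 * ((q-2)/2) = (q-1) - 1 by ring]
      exact aux_rpow_sub_one_mul ht0 hq1
    have e2 : (((t - a):ℝ) ^ 2) ^ ((q - 2) / 2) * (t - a) = (t - a) ^ (q - 1) := by
      rw [aux_sq_rpow (t-a) ((q-2)/2), abs_of_nonneg (by linarith : (0:ℝ) ≤ t - a),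
        show 2 * ((q-2)/2) = (q-1) - 1 by ring]
      exact aux_rpow_sub_one_mul (by linarith) hq1
    simp only [hF'def]
    rw [e1, e2]
    have hsup := aux_superadd ha (by linarith : (0:ℝ) ≤ t - a) (by linarith : 1 ≤ q - 1)
    rw [show a + (t - a) = t by ring] at hsup
    have hKle : K * (t - a) ^ (q - 1) ≤ (t - a) ^ (q - 1) := by
      nlinarith [Real.rpow_nonneg (by linarith : (0:ℝ) ≤ t - a) (q - 1)]
    nlinarith
  have hsign_neg : ∀ t, t ≤ a → F' t ≤ 0 := by
    intro t hta
    have e2 : (((t - a):ℝ) ^ 2) ^ ((q - 2) / 2) * (t - a) = -((a - t) ^ (q - 1)) := by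
      rw [aux_sq_rpow (t-a) ((q-2)/2), abs_of_nonpos (by linarith : t - a ≤ 0),
        show -(t-a) = a - t by ring, show 2 * ((q-2)/2) = (q-1) - 1 by ring,
        show (t - a) = -(a-t) by ring]
      rw [mul_neg, aux_rpow_sub_one_mul (by linarith) hq1]
    simp only [hF'def]
    rw [e2]
    rcases le_or_gt 0 t with ht0 | ht0
    · have e1 : ((t:ℝ) ^ 2) ^ ((q - 2) / 2) * t = t ^ (q - 1) := by
        rw [aux_sq_rpow t ((q-2)/2), abs_of_nonneg ht0, show 2 * ((q-2)/2) = (q-1) - 1 by ring]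
        exact aux_rpow_sub_one_mul ht0 hq1
      rw [e1]
      have hsup := aux_superadd ht0 (by linarith : (0:ℝ) ≤ a - t) (by linarith : 1 ≤ q - 1)
      rw [show t + (a - t) = a by ring] at hsup
      have hKle : K * (a - t) ^ (q - 1) ≤ (a - t) ^ (q - 1) := by
        nlinarith [Real.rpow_nonneg (by linarith : (0:ℝ) ≤ a - t) (q - 1)]
      nlinarith
    · have hnt : (0:ℝ) ≤ -t := by linarith
      have e1 : ((t:ℝ) ^ 2) ^ ((q - 2) / 2) * t = -((-t) ^ (q - 1)) := by
        rw [aux_sq_rpow t ((q-2)/2), abs_of_neg ht0,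
          show 2 * ((q-2)/2) = (q-1) - 1 by ring, ← aux_rpow_sub_one_mul hnt hq1]
        ring
      rw [e1]
      have hpm := aux_powmean ha (by linarith : (0:ℝ) ≤ -t) (by linarith : 1 ≤ q - 1)
      rw [show (q:ℝ) - 1 - 1 = q - 2 by ring, show a + -t = a - t by ring] at hpm
      nlinarith
  -- F b ≥ F a
  have hmain : F a ≤ F b := by
    rcases le_total a b with hab | hab
    · have hmono : MonotoneOn F (Set.Ici a) :=
        monotoneOn_of_deriv_nonneg (convex_Ici a)
          (fun t _ => (hderiv t).continuousAt.continuousWithinAt)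
          (fun t _ => (hderiv t).differentiableAt.differentiableWithinAt)
          (fun t ht => by
            rw [(hderiv t).deriv]
            exact hsign_pos t (le_of_lt (by simpa [interior_Ici] using ht)))
      exact hmono (Set.self_mem_Ici) (Set.mem_Ici.2 hab) hab
    · have hanti : AntitoneOn F (Set.Iic a) :=
        antitoneOn_of_deriv_nonpos (convex_Iic a)
          (fun t _ => (hderiv t).continuousAt.continuousWithinAt)
          (fun t _ => (hderiv t).differentiableAt.differentiableWithinAt)
          (fun t ht => by
            rw [(hderiv t).deriv]
            exact hsign_neg t (le_of_lt (by simpa [interior_Iic] using ht)))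
      exact hanti (Set.mem_Iic.2 hab) (Set.self_mem_Iic) hab
  rw [hFa] at hmain
  simp only [hFdef] at hmain
  rw [aux_sq_rpow b (q/2), aux_sq_rpow (b - a) (q/2), show 2 * (q / 2) = q by ring] at hmain
  linarith

/-- Key scalar reduction: endpoint/convexity argument in `s = D²`. -/
lemma keyM (q : ℝ) (hq : 2 ≤ q) {A B D t : ℝ} (hA : 0 ≤ A) (hB : 0 ≤ B) (hD : 0 ≤ D)
    (hDsq : D ^ 2 = A ^ 2 + B ^ 2 - 2 * t) (ht1 : t ≤ A * B) (ht2 : -(A * B) ≤ t) :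
    A ^ q + q * (A ^ (q - 2) * (t - A ^ 2)) + (1 / 2 : ℝ) ^ (q - 2) * D ^ q ≤ B ^ q := by
  have hq0 : (0:ℝ) < q := by linarith
  have hhalf : 1 ≤ q / 2 := by linarith
  set K : ℝ := (1 / 2 : ℝ) ^ (q - 2) with hKdef
  have hK0 : 0 ≤ K := Real.rpow_nonneg (by norm_num) _
  have hK1 : K ≤ 1 := Real.rpow_le_one (by norm_num) (by norm_num) (by linarith)
  rcases eq_or_lt_of_le hA with hA0 | hApos
  · -- A = 0
    rw [← hA0] at ht1 ht2 hDsq ⊢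
    have ht0 : t = 0 := le_antisymm (by simpa using ht1) (by simpa using ht2)
    have hDB : D = B := by
      have h1 : |D| = |B| := by
        rw [← Real.sqrt_sq_eq_abs, ← Real.sqrt_sq_eq_abs]
        rw [hDsq, ht0]; ring_nf
      rwa [abs_of_nonneg hD, abs_of_nonneg hB] at h1
    rw [ht0, hDB]
    have h0q : (0:ℝ) ^ q = 0 := Real.zero_rpow hq0.ne'
    have hBq : 0 ≤ B ^ q := Real.rpow_nonneg hB q
    have : (0:ℝ) ^ (q-2) * ((0:ℝ) - 0 ^ 2) = 0 := by norm_num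
    rw [h0q, this]
    nlinarith
  · -- A > 0
    have idA2 : A ^ (q - 2) * A ^ 2 = A ^ q := by
      rw [← Real.rpow_natCast A 2, ← Real.rpow_add hApos]; norm_num
    have idA1 : A ^ (q - 2) * A = A ^ (q - 1) := by
      have h := (Real.rpow_add hApos (q - 2) 1).symm
      rw [Real.rpow_one] at h
      rw [show q - 2 + 1 = q - 1 by ring] at h
      exact h
    have idA1' : A ^ (q - 1) * A = A ^ q := by
      have h := (Real.rpow_add hApos (q - 1) 1).symm
      rw [Real.rpow_one] at h
      rw [show q - 1 + 1 = q by ring] at h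
      exact h
    -- convexity in s = D^2
    set c : ℝ := -(q / 2) * A ^ (q - 2) with hcdef
    have hconv : ConvexOn ℝ (Set.Ici 0) (fun x : ℝ => K * x ^ (q / 2) + c * x) := by
      refine ⟨convex_Ici 0, ?_⟩
      intro x hx y hy a b ha hb hab
      have h := (convexOn_rpow hhalf).2 hx hy ha hb hab
      simp only [smul_eq_mul] at h ⊢
      nlinarith [mul_le_mul_of_nonneg_left h hK0]
    have hs12 : (A - B) ^ 2 ≤ (A + B) ^ 2 := by nlinarith
    have hseg : D ^ 2 ∈ segment ℝ ((A - B) ^ 2) ((A + B) ^ 2) := by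
      rw [segment_eq_Icc hs12]
      constructor <;> nlinarith
    have happ := hconv.le_on_segment (Set.mem_Ici.2 (sq_nonneg (A - B)))
      (Set.mem_Ici.2 (sq_nonneg (A + B))) hseg
    -- endpoint rpow computations
    have hs2q : (((A + B) ^ 2 : ℝ)) ^ (q / 2) = (A + B) ^ q := by
      rw [aux_sq_rpow, abs_of_nonneg (add_nonneg hA hB), show 2 * (q / 2) = q by ring]
    have hs1q : (((A - B) ^ 2 : ℝ)) ^ (q / 2) = |A - B| ^ q := by
      rw [aux_sq_rpow, show 2 * (q / 2) = q by ring]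
    have hsq' : ((D ^ 2 : ℝ)) ^ (q / 2) = D ^ q := by
      rw [aux_sq_rpow, abs_of_nonneg hD, show 2 * (q / 2) = q by ring]
    -- scalar Bregman at b = -B and b = B
    have hsb2 := scalarBregman q hq hA (-B)
    rw [show -B - A = -(A + B) by ring, abs_neg, abs_neg,
      abs_of_nonneg (add_nonneg hA hB), abs_of_nonneg hB, ← hKdef] at hsb2
    have hsb1 := scalarBregman q hq hA B
    rw [abs_sub_comm B A, abs_of_nonneg hB, ← hKdef] at hsb1
    -- endpoint bounds
    set R : ℝ := B ^ q - A ^ q - (q / 2) * (A ^ (q - 2) * (B ^ 2 - A ^ 2)) with hRdef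
    have eqX : (q / 2) * (A ^ (q - 2) * ((A + B) ^ 2 - (B ^ 2 - A ^ 2)))
        = q * A ^ q + q * (A ^ (q - 1) * B) := by
      linear_combination q * idA2 + q * B * idA1
    have eqY : (q / 2) * (A ^ (q - 2) * ((A - B) ^ 2 - (B ^ 2 - A ^ 2)))
        = q * A ^ q - q * (A ^ (q - 1) * B) := by
      linear_combination q * idA2 - q * B * idA1
    have idA1'q : q * (A ^ (q - 1) * A) = q * A ^ q := by linear_combination q * idA1'
    have h2R : K * ((A + B) ^ 2 : ℝ) ^ (q / 2) + c * (A + B) ^ 2 ≤ R := by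
      rw [hs2q, hcdef, hRdef]
      linarith [hsb2, eqX, idA1'q]
    have h1R : K * ((A - B) ^ 2 : ℝ) ^ (q / 2) + c * (A - B) ^ 2 ≤ R := by
      rw [hs1q, hcdef, hRdef]
      linarith [hsb1, eqY, idA1'q]
    have hsR : K * ((D ^ 2 : ℝ)) ^ (q / 2) + c * D ^ 2 ≤ R :=
      le_trans happ (max_le h1R h2R)
    rw [hsq', hcdef, hRdef] at hsR
    have htsq : q * (A ^ (q - 2) * (t - A ^ 2)) * 2
        = q * (A ^ (q - 2) * (B ^ 2 - A ^ 2 - D ^ 2)) := by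
      linear_combination (q * A ^ (q - 2)) * hDsq
    linarith [hsR, htsq]

/-- ψ(x) = (1/q)‖x - x₀‖^q is uniformly convex of degree q with constant (1/2)^(q-2). -/
theorem power_norm_uniformly_convex {n : ℕ} (q : ℝ) (hq : 2 ≤ q)
    (x₀ : EuclideanSpace ℝ (Fin n)) :
    ∀ x y : EuclideanSpace ℝ (Fin n),
      (1 / q) * ‖y - x₀‖ ^ q ≥
        (1 / q) * ‖x - x₀‖ ^ q
          + inner ℝ (‖x - x₀‖ ^ (q - 2) • (x - x₀)) (y - x)
          + ((1 / 2 : ℝ) ^ (q - 2) / q) * ‖x - y‖ ^ q := by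
  intro x y
  have hq0 : (0:ℝ) < q := by linarith
  set u : EuclideanSpace ℝ (Fin n) := x - x₀ with hu
  set v : EuclideanSpace ℝ (Fin n) := y - x₀ with hv
  have hyx : y - x = v - u := by rw [hu, hv]; abel
  have hxy : x - y = u - v := by rw [hu, hv]; abel
  have hinner : (inner ℝ (‖u‖ ^ (q - 2) • u) (y - x) : ℝ)
      = ‖u‖ ^ (q - 2) * ((inner ℝ u v : ℝ) - ‖u‖ ^ 2) := by
    rw [hyx, real_inner_smul_left, inner_sub_right, real_inner_self_eq_norm_sq]
  have hDsq : ‖u - v‖ ^ 2 = ‖u‖ ^ 2 + ‖v‖ ^ 2 - 2 * (inner ℝ u v : ℝ) := by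
    rw [norm_sub_sq_real]; ring
  have ht1 : (inner ℝ u v : ℝ) ≤ ‖u‖ * ‖v‖ := real_inner_le_norm u v
  have ht2 : -(‖u‖ * ‖v‖) ≤ (inner ℝ u v : ℝ) :=
    (abs_le.mp (abs_real_inner_le_norm u v)).1
  have hM := keyM q hq (norm_nonneg u) (norm_nonneg v) (norm_nonneg (u - v)) hDsq ht1 ht2
  rw [ge_iff_le, hxy, hinner]
  have expand : (1 / q) * ‖v‖ ^ q
      - ((1 / q) * ‖u‖ ^ q + ‖u‖ ^ (q - 2) * ((inner ℝ u v : ℝ) - ‖u‖ ^ 2)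
        + ((1 / 2 : ℝ) ^ (q - 2) / q) * ‖u - v‖ ^ q)
      = (1 / q) * (‖v‖ ^ q - (‖u‖ ^ q
        + q * (‖u‖ ^ (q - 2) * ((inner ℝ u v : ℝ) - ‖u‖ ^ 2))
        + (1 / 2 : ℝ) ^ (q - 2) * ‖u - v‖ ^ q)) := by
    field_simp
  have hnn : 0 ≤ (1 / q) * (‖v‖ ^ q - (‖u‖ ^ q
      + q * (‖u‖ ^ (q - 2) * ((inner ℝ u v : ℝ) - ‖u‖ ^ 2))
      + (1 / 2 : ℝ) ^ (q - 2) * ‖u - v‖ ^ q)) :=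
    mul_nonneg (by positivity) (sub_nonneg.2 hM)
  linarith [expand, hnn]
end

section
/- Let ψ(x) = log(Σ_{i=1}^m exp(⟨a_i, x⟩)) be the log-sum-exp function on ℝⁿ with vectors a₁,…,a_m, and suppose D := Σ_{i=1}^m a_i a_iᵀ is positive definite. Endow ℝⁿ with the norm ‖x‖ = ⟨Dx, x⟩^{1/2}. Then the gradient of ψ is Lipschitz continuous with constant L₁ = 1 with respect to this norm, i.e., ψ(y) ≤ ψ(x) + ⟨∇ψ(x), y − x⟩ + (1/2)‖y − x‖² for all x, y. -/
open Real Finset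

lemma oneDim {m : ℕ} (hm : 0 < m) (c b : Fin m → ℝ) :
    Real.log (∑ i, Real.exp (c i + b i)) ≤ Real.log (∑ i, Real.exp (c i))
      + (∑ i, Real.exp (c i) * b i) / (∑ i, Real.exp (c i))
      + (1 / 2) * ∑ i, (b i) ^ 2 := by
  haveI : Nonempty (Fin m) := Fin.pos_iff_nonempty.mp hm
  set S : ℝ → ℝ := fun t => ∑ i, Real.exp (c i + t * b i) with hSdef
  set N : ℝ → ℝ := fun t => ∑ i, Real.exp (c i + t * b i) * b i with hNdef
  set M : ℝ → ℝ := fun t => ∑ i, Real.exp (c i + t * b i) * b i * b i with hMdef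
  set K : ℝ := ∑ i, (b i) ^ 2 with hKdef
  have hS : ∀ t, 0 < S t := fun t =>
    Finset.sum_pos (fun i _ => Real.exp_pos _) univ_nonempty
  have hexp : ∀ (i : Fin m) (t : ℝ),
      HasDerivAt (fun t => Real.exp (c i + t * b i)) (Real.exp (c i + t * b i) * b i) t := by
    intro i t
    simpa using (((hasDerivAt_id t).mul_const (b i)).const_add (c i)).exp
  have hS' : ∀ t, HasDerivAt S (N t) t := fun t =>
    HasDerivAt.fun_sum (fun i _ => hexp i t)
  have hN' : ∀ t, HasDerivAt N (M t) t := fun t =>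
    HasDerivAt.fun_sum (fun i _ => (hexp i t).mul_const (b i))
  set q : ℝ → ℝ := fun t => N t / S t with hqdef
  have hq' : ∀ t, HasDerivAt q ((M t * S t - N t * N t) / (S t) ^ 2) t := fun t =>
    (hN' t).div (hS' t) (hS t).ne'
  have hMK : ∀ t, M t ≤ K * S t := by
    intro t
    have h1 : ∀ i : Fin m, Real.exp (c i + t * b i) * b i * b i ≤ (b i) ^ 2 * S t := by
      intro i
      have h2 : Real.exp (c i + t * b i) ≤ S t :=
        Finset.single_le_sum (f := fun j => Real.exp (c j + t * b j))
          (fun j _ => (Real.exp_pos _).le) (mem_univ i)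
      nlinarith [sq_nonneg (b i), Real.exp_pos (c i + t * b i)]
    calc M t ≤ ∑ i, (b i) ^ 2 * S t := Finset.sum_le_sum (fun i _ => h1 i)
      _ = K * S t := by rw [← Finset.sum_mul]
  have hkey : ∀ t, (M t * S t - N t * N t) / (S t) ^ 2 ≤ K := by
    intro t
    rw [div_le_iff₀ (by positivity)]
    nlinarith [hMK t, hS t, sq_nonneg (N t)]
  set G : ℝ → ℝ := fun t => q 0 + K * t - q t with hGdef
  have hG' : ∀ t, HasDerivAt G (K - (M t * S t - N t * N t) / (S t) ^ 2) t := by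
    intro t
    have : HasDerivAt (fun t : ℝ => q 0 + K * t) (K) t := by
      simpa using ((hasDerivAt_id t).const_mul K).const_add (q 0)
    exact this.sub (hq' t)
  have hGmono : Monotone G :=
    monotone_of_deriv_nonneg (fun t => (hG' t).differentiableAt)
      (fun t => by rw [(hG' t).deriv]; linarith [hkey t])
  have hGnn : ∀ t : ℝ, 0 ≤ t → 0 ≤ G t := by
    intro t ht
    have : G 0 ≤ G t := hGmono ht
    simpa [hGdef] using this
  set g : ℝ → ℝ := fun t => Real.log (S 0) + q 0 * t + K * t ^ 2 / 2 - Real.log (S t)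
    with hgdef
  have hg' : ∀ t, HasDerivAt g (G t) t := by
    intro t
    have hlog : HasDerivAt (fun t => Real.log (S t)) (N t / S t) t :=
      (hS' t).log (hS t).ne'
    have h1 : HasDerivAt (fun t : ℝ => Real.log (S 0) + q 0 * t + K * t ^ 2 / 2)
        (q 0 + K * t) t := by
      have ha : HasDerivAt (fun t : ℝ => Real.log (S 0) + q 0 * t) (q 0) t := by
        simpa using ((hasDerivAt_id t).const_mul (q 0)).const_add (Real.log (S 0))
      have hb : HasDerivAt (fun t : ℝ => K * t ^ 2 / 2) (K * t) t := by
        have := ((hasDerivAt_pow 2 t).const_mul K).div_const 2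
        simpa using this.congr_deriv (by ring)
      exact ha.add hb
    have := h1.sub hlog
    exact this
  have hgdiff : Differentiable ℝ g := fun t => (hg' t).differentiableAt
  have hgm : MonotoneOn g (Set.Icc (0:ℝ) 1) := by
    apply monotoneOn_of_deriv_nonneg (convex_Icc 0 1) hgdiff.continuous.continuousOn
      (hgdiff.differentiableOn)
    intro t ht
    rw [(hg' t).deriv]
    exact hGnn t (le_of_lt (by simpa using (Set.mem_Ioo.mp (by simpa using ht)).1))
  have hfin : g 0 ≤ g 1 := hgm (by norm_num) (by norm_num) (by norm_num)
  have hg0 : g 0 = 0 := by simp [hgdef]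
  have hg1 : Real.log (S 1) ≤ Real.log (S 0) + q 0 + K / 2 := by
    rw [hg0] at hfin
    simp only [hgdef] at hfin
    nlinarith [hfin]
  have hS1 : S 1 = ∑ i, Real.exp (c i + b i) := by simp [hSdef]
  have hS0 : S 0 = ∑ i, Real.exp (c i) := by simp [hSdef]
  have hN0 : N 0 = ∑ i, Real.exp (c i) * b i := by simp [hNdef]
  calc Real.log (∑ i, Real.exp (c i + b i)) = Real.log (S 1) := by rw [hS1]
    _ ≤ Real.log (S 0) + q 0 + K / 2 := hg1
    _ = Real.log (∑ i, Real.exp (c i)) + (∑ i, Real.exp (c i) * b i) / (∑ i, Real.exp (c i))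
        + (1 / 2) * ∑ i, (b i) ^ 2 := by
        rw [hqdef]; simp only [hN0, hS0]; rw [hKdef]; ring

/-- The log-sum-exp function has Lipschitz continuous gradient with constant 1
with respect to the norm induced by D = ∑ aᵢ aᵢᵀ. -/
theorem log_sum_exp_gradient_lipschitz {n m : ℕ} (a : Fin m → EuclideanSpace ℝ (Fin n))
    (D : EuclideanSpace ℝ (Fin n) → EuclideanSpace ℝ (Fin n))
    (hD : D = fun x => ∑ i, (inner ℝ (a i) x : ℝ) • a i)
    (hDpos : ∀ x : EuclideanSpace ℝ (Fin n), x ≠ 0 → (0 : ℝ) < inner ℝ (D x) x)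
    (ψ : EuclideanSpace ℝ (Fin n) → ℝ)
    (hψ : ψ = fun x => Real.log (∑ i, Real.exp (inner ℝ (a i) x : ℝ))) :
    ∀ x y : EuclideanSpace ℝ (Fin n),
      ψ y ≤ ψ x + fderiv ℝ ψ x (y - x) + (1 / 2) * (inner ℝ (D (y - x)) (y - x) : ℝ) := by
  subst hD hψ
  intro x y
  by_cases hm : m = 0
  · subst hm
    simp
  have hm' : 0 < m := Nat.pos_of_ne_zero hm
  haveI : Nonempty (Fin m) := Fin.pos_iff_nonempty.mp hm'
  set v := y - x with hv
  have hy : y = x + v := by simp [hv]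
  set c : Fin m → ℝ := fun i => inner ℝ (a i) x with hc
  set b : Fin m → ℝ := fun i => inner ℝ (a i) v with hb
  have hinner_y : ∀ i, (inner ℝ (a i) y : ℝ) = c i + b i := by
    intro i; rw [hy, inner_add_right]
  have hS0 : (0:ℝ) < ∑ i, Real.exp (c i) :=
    Finset.sum_pos (fun i _ => Real.exp_pos _) univ_nonempty
  -- derivative
  have hsum : HasFDerivAt (fun z : EuclideanSpace ℝ (Fin n) => ∑ i, Real.exp ((inner ℝ (a i) z : ℝ)))
      (∑ i, Real.exp (c i) • (innerSL ℝ (a i))) x := by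
    refine HasFDerivAt.fun_sum (fun i _ => ?_)
    exact ((innerSL ℝ (a i)).hasFDerivAt).exp
  have hψf : HasFDerivAt (fun z : EuclideanSpace ℝ (Fin n) =>
        Real.log (∑ i, Real.exp ((inner ℝ (a i) z : ℝ))))
      ((∑ i, Real.exp (c i))⁻¹ • (∑ i, Real.exp (c i) • (innerSL ℝ (a i)))) x :=
    hsum.log hS0.ne'
  have hfd : fderiv ℝ (fun z : EuclideanSpace ℝ (Fin n) =>
        Real.log (∑ i, Real.exp ((inner ℝ (a i) z : ℝ)))) x v
      = (∑ i, Real.exp (c i) * b i) / (∑ i, Real.exp (c i)) := by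
    rw [hψf.fderiv]
    simp only [ContinuousLinearMap.smul_apply, ContinuousLinearMap.coe_sum',
      Finset.sum_apply, innerSL_apply_apply, ← hv, smul_eq_mul]
    rw [div_eq_inv_mul]
  -- quadratic term
  have hquad : (inner ℝ ((fun x => ∑ i, (inner ℝ (a i) x : ℝ) • a i) v) v : ℝ) = ∑ i, (b i)^2 := by
    simp only [sum_inner, real_inner_smul_left]
    exact Finset.sum_congr rfl (fun i _ => (pow_two (b i)).symm)
  have hmain := oneDim hm' c b
  have hψy : Real.log (∑ i, Real.exp ((inner ℝ (a i) y : ℝ)))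
      = Real.log (∑ i, Real.exp (c i + b i)) := by
    congr 1; exact Finset.sum_congr rfl (fun i _ => by rw [hinner_y])
  rw [hfd, hquad]
  calc Real.log (∑ i, Real.exp ((inner ℝ (a i) y : ℝ)))
      = Real.log (∑ i, Real.exp (c i + b i)) := hψy
    _ ≤ Real.log (∑ i, Real.exp (c i)) + (∑ i, Real.exp (c i) * b i) / (∑ i, Real.exp (c i))
        + (1/2) * ∑ i, (b i)^2 := hmain
end

section
/- Closed-form proximal operator of the quartic: for any y₀ ∈ ℝⁿ, the unique minimizer y of F(y) = (1/4)‖y‖⁴ + (1/2)‖y − y₀‖² is y = y₀/(ρ² + 1), where ρ ≥ 0 is the unique nonnegative real root of the cubic equation ρ³ + ρ = ‖y₀‖; moreover ρ = ‖y‖. -/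
open Real

/-- Closed-form proximal operator of the quartic term: the unique minimizer of
F(y) = (1/4)‖y‖⁴ + (1/2)‖y - y₀‖² is y = y₀/(ρ² + 1), where ρ ≥ 0 is the unique
nonnegative root of ρ³ + ρ = ‖y₀‖, and ρ = ‖y‖. -/
theorem quartic_prox_closed_form {n : ℕ} (y₀ : EuclideanSpace ℝ (Fin n))
    (ρ : ℝ) (hρ : 0 ≤ ρ) (hroot : ρ ^ 3 + ρ = ‖y₀‖)
    (F : EuclideanSpace ℝ (Fin n) → ℝ)
    (hF : F = fun y => (1 / 4) * ‖y‖ ^ 4 + (1 / 2) * ‖y - y₀‖ ^ 2)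
    (y : EuclideanSpace ℝ (Fin n)) (hy : y = (ρ ^ 2 + 1)⁻¹ • y₀) :
    (∀ z, F y ≤ F z) ∧ (∀ z, (∀ w, F z ≤ F w) → z = y) ∧ ‖y‖ = ρ := by
  have hpos : (0:ℝ) < ρ ^ 2 + 1 := by positivity
  have hne : (ρ ^ 2 + 1 : ℝ) ≠ 0 := ne_of_gt hpos
  have hy₀ : y₀ = (ρ ^ 2 + 1) • y := by
    rw [hy, smul_smul, mul_inv_cancel₀ hne, one_smul]
  have hny : ‖y‖ = ρ := by
    rw [hy, norm_smul, Real.norm_eq_abs, abs_inv, abs_of_pos hpos, ← hroot]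
    field_simp
  have key : ∀ z : EuclideanSpace ℝ (Fin n),
      F z - F y = (‖z‖ - ρ) ^ 2 * ((1/4) * (‖z‖ ^ 2 + 2 * ‖z‖ * ρ + 3 * ρ ^ 2) + 1/2)
        + (ρ ^ 2 + 1) * (‖z‖ * ρ - inner ℝ z y) := by
    intro z
    have h1 : ‖z - y₀‖ ^ 2 = ‖z‖ ^ 2 - 2 * inner ℝ z y₀ + ‖y₀‖ ^ 2 :=
      norm_sub_sq_real z y₀
    have h2 : ‖y - y₀‖ ^ 2 = ‖y‖ ^ 2 - 2 * inner ℝ y y₀ + ‖y₀‖ ^ 2 :=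
      norm_sub_sq_real y y₀
    have h3 : (inner ℝ z y₀ : ℝ) = (ρ ^ 2 + 1) * inner ℝ z y := by
      rw [hy₀, real_inner_smul_right]
    have h4 : (inner ℝ y y₀ : ℝ) = (ρ ^ 2 + 1) * ρ ^ 2 := by
      rw [hy₀, real_inner_smul_right, real_inner_self_eq_norm_sq, hny]
    have h5 : ‖y₀‖ = ρ ^ 3 + ρ := hroot.symm
    rw [hF]
    simp only
    rw [h1, h2, h3, h4, h5, hny]
    ring
  have hle : ∀ z, F y ≤ F z := by
    intro z
    have hk := key z
    have hcs : (inner ℝ z y : ℝ) ≤ ‖z‖ * ‖y‖ := real_inner_le_norm z y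
    rw [hny] at hcs
    nlinarith [sq_nonneg (‖z‖ - ρ), norm_nonneg z, sq_nonneg ‖z‖, sq_nonneg ρ,
      mul_nonneg (norm_nonneg z) hρ]
  refine ⟨hle, ?_, hny⟩
  intro z hz
  have heq : F z = F y := le_antisymm (hz y) (hle z)
  have hk := key z
  rw [heq, sub_self] at hk
  have hcs : (inner ℝ z y : ℝ) ≤ ‖z‖ * ρ := by
    have := real_inner_le_norm z y; rwa [hny] at this
  have hA : (0:ℝ) ≤ (‖z‖ - ρ) ^ 2 * ((1/4) * (‖z‖ ^ 2 + 2 * ‖z‖ * ρ + 3 * ρ ^ 2) + 1/2) := by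
    have : (0:ℝ) ≤ ‖z‖ ^ 2 + 2 * ‖z‖ * ρ + 3 * ρ ^ 2 := by positivity
    nlinarith [sq_nonneg (‖z‖ - ρ)]
  have hB : (0:ℝ) ≤ (ρ ^ 2 + 1) * (‖z‖ * ρ - inner ℝ z y) := by
    nlinarith
  have hA0 : (‖z‖ - ρ) ^ 2 * ((1/4) * (‖z‖ ^ 2 + 2 * ‖z‖ * ρ + 3 * ρ ^ 2) + 1/2) = 0 := by
    linarith
  have hB0 : (ρ ^ 2 + 1) * (‖z‖ * ρ - inner ℝ z y) = 0 := by linarith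
  have haρ : ‖z‖ = ρ := by
    have hc : (0:ℝ) < (1/4) * (‖z‖ ^ 2 + 2 * ‖z‖ * ρ + 3 * ρ ^ 2) + 1/2 := by
      have : (0:ℝ) ≤ ‖z‖ ^ 2 + 2 * ‖z‖ * ρ + 3 * ρ ^ 2 := by positivity
      linarith
    have h0 := (mul_eq_zero.mp hA0).resolve_right (ne_of_gt hc)
    have := pow_eq_zero_iff (n := 2) (by norm_num) |>.mp h0
    linarith [sub_eq_zero.mp this]
  have ht : (inner ℝ z y : ℝ) = ‖z‖ * ρ := by
    have := (mul_eq_zero.mp hB0).resolve_left hne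
    linarith
  have hzy : ‖z - y‖ ^ 2 = 0 := by
    rw [norm_sub_sq_real, ht, hny, haρ]; ring
  have : z - y = 0 := by
    have := pow_eq_zero_iff (n := 2) (by norm_num) |>.mp hzy
    exact norm_eq_zero.mp this
  exact sub_eq_zero.mp this
end
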